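/- For nonnegative integers a, b, the multiple zeta star value satisfies H*(a, b) = -4 ζ(2a+1, overline{2b+2}) - 2 ζ(overline{2a+2b+3}), where H*(a,b) = ζ*(2,…,2,3,2,…,2) with a twos before the 3 and b twos after. -/

import Mathlib

open Filter Finset Real

/-- `zeta k` : the Riemann zeta value `ζ(k) = Σ_{m≥1} 1/m^k`, with the convention `ζ(0) = -1/2`. -/
noncomputable def zeta (k : ℕ) : ℝ :=
  if k = 0 then -1/2 else limUnder atTop (fun N => ∑ m ∈ Finset.range N, 1/((m+1 : ℝ))^k)

/-- `zetaA k` : the alternating zeta value `ζ(k̄) = Σ_{m≥1} (-1)^m/m^k`,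
with the convention `ζ(0̄) = -1/2`. -/
noncomputable def zetaA (k : ℕ) : ℝ :=
  if k = 0 then -1/2 else
    limUnder atTop (fun N => ∑ m ∈ Finset.range N, (-1 : ℝ)^(m+1)/((m+1 : ℝ))^k)

/-- `dzeta r s = ζ(r,s) = Σ_{m≥2} (1/m^s) Σ_{j=1}^{m-1} 1/j^r`. -/
noncomputable def dzeta (r s : ℕ) : ℝ :=
  limUnder atTop (fun N => ∑ m ∈ Finset.range N,
    (1/((m+2 : ℝ))^s) * ∑ j ∈ Finset.range (m+1), 1/((j+1 : ℝ))^r)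

/-- `dzetaA1 r s = ζ(r̄,s) = Σ_{m≥2} (1/m^s) Σ_{j=1}^{m-1} (-1)^j/j^r`. -/
noncomputable def dzetaA1 (r s : ℕ) : ℝ :=
  limUnder atTop (fun N => ∑ m ∈ Finset.range N,
    (1/((m+2 : ℝ))^s) * ∑ j ∈ Finset.range (m+1), (-1 : ℝ)^(j+1)/((j+1 : ℝ))^r)

/-- `dzetaA2 r s = ζ(r,s̄) = Σ_{m≥2} ((-1)^m/m^s) Σ_{j=1}^{m-1} 1/j^r`. -/
noncomputable def dzetaA2 (r s : ℕ) : ℝ :=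
  limUnder atTop (fun N => ∑ m ∈ Finset.range N,
    ((-1 : ℝ)^(m+2)/((m+2 : ℝ))^s) * ∑ j ∈ Finset.range (m+1), 1/((j+1 : ℝ))^r)

/-- `dzetaA3 r s = ζ(r̄,s̄) = Σ_{m≥2} ((-1)^m/m^s) Σ_{j=1}^{m-1} (-1)^j/j^r`. -/
noncomputable def dzetaA3 (r s : ℕ) : ℝ :=
  limUnder atTop (fun N => ∑ m ∈ Finset.range N,
    ((-1 : ℝ)^(m+2)/((m+2 : ℝ))^s) * ∑ j ∈ Finset.range (m+1), (-1 : ℝ)^(j+1)/((j+1 : ℝ))^r)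

/-- Multiple zeta star value `ζ*(k₁,…,k_n) = Σ_{1 ≤ m₁ ≤ … ≤ m_n} ∏ 1/m_i^{k_i}`. -/
noncomputable def mzvStar (n : ℕ) (k : Fin n → ℕ) : ℝ :=
  ∑' m : {f : Fin n → ℕ+ // Monotone f}, ∏ i, (1 : ℝ)/((m.1 i : ℝ))^(k i)

/-- Multiple zeta value `ζ(k₁,…,k_n) = Σ_{1 ≤ m₁ < … < m_n} ∏ 1/m_i^{k_i}`. -/
noncomputable def mzv (n : ℕ) (k : Fin n → ℕ) : ℝ :=
  ∑' m : {f : Fin n → ℕ+ // StrictMono f}, ∏ i, (1 : ℝ)/((m.1 i : ℝ))^(k i)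

/-- The exponent string `(2,…,2,3,2,…,2)` with `a` twos before the `3` and `b` twos after. -/
def expo232 (a b : ℕ) : Fin (a+b+1) → ℕ := fun i => if (i : ℕ) = a then 3 else 2

/-- `H*(a,b) = ζ*(2^a, 3, 2^b)`. -/
noncomputable def Hstar (a b : ℕ) : ℝ := mzvStar (a+b+1) (expo232 a b)

/-- `H*(n) = ζ*(2^n)` (so `H*(0) = 1`). -/
noncomputable def HstarN (n : ℕ) : ℝ := mzvStar n (fun _ => 2)

/-- `H(a,b) = ζ(2^a, 3, 2^b)`. -/
noncomputable def Hmzv (a b : ℕ) : ℝ := mzv (a+b+1) (expo232 a b)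

/-- `H(n) = ζ(2^n)` (so `H(0) = 1`). -/
noncomputable def HmzvN (n : ℕ) : ℝ := mzv n (fun _ => 2)


open Topology

/-- The coefficient `A m N = (N!)^2/((N-m)!(N+m)!)`, `0` if `m > N`. -/
noncomputable def Acf (m N : ℕ) : ℝ :=
  if m ≤ N then ((N.factorial : ℝ))^2 / ((N - m).factorial * (N + m).factorial) else 0

lemma Acf_of_gt {m N : ℕ} (h : N < m) : Acf m N = 0 := by
  simp [Acf, Nat.not_le.mpr h]

lemma Acf_nonneg (m N : ℕ) : 0 ≤ Acf m N := by
  unfold Acf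
  split
  · positivity
  · exact le_refl 0

lemma Acf_zero (N : ℕ) : Acf 0 N = 1 := by
  simp [Acf]
  rw [sq]
  field_simp

lemma Acf_one (N : ℕ) : Acf 1 N = N / (N + 1) := by
  cases N with
  | zero => simp [Acf_of_gt]
  | succ n =>
    have h1 : (1:ℕ) ≤ n+1 := by omega
    rw [Acf, if_pos h1]
    have h2 : n + 1 - 1 = n := by omega
    rw [h2]
    have h3 : (n+1+1).factorial = (n+2) * (n+1).factorial := by
      rw [show n+1+1 = (n+1)+1 by ring, Nat.factorial_succ]
    have h4 : (n+1).factorial = (n+1) * n.factorial := Nat.factorial_succ n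
    have hn : (n.factorial : ℝ) ≠ 0 := Nat.cast_ne_zero.mpr (Nat.factorial_ne_zero n)
    push_cast [h3, h4]
    field_simp
    ring

/-- (P1'): `Acf m (N+1) * ((N+1)^2 - m^2) = Acf m N * (N+1)^2`, unconditionally. -/
lemma Acf_succ_right (m N : ℕ) :
    Acf m (N+1) * (((N:ℝ)+1)^2 - (m:ℝ)^2) = Acf m N * ((N:ℝ)+1)^2 := by
  rcases le_or_gt m N with h | h
  · have h1 : m ≤ N + 1 := by omega
    rw [Acf, if_pos h1, Acf, if_pos h]
    have e1 : N + 1 - m = (N - m) + 1 := by omega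
    have e2 : ((N+1) - m).factorial = ((N:ℝ)+1-m) * (N-m).factorial := by
      rw [e1, Nat.factorial_succ]
      push_cast [Nat.cast_sub h]
      ring
    have e3 : ((N+1) + m).factorial = ((N:ℝ)+1+m) * (N+m).factorial := by
      rw [show N+1+m = (N+m)+1 by ring, Nat.factorial_succ]
      push_cast
      ring
    have e4 : ((N+1).factorial : ℝ) = ((N:ℝ)+1) * N.factorial := by
      rw [Nat.factorial_succ]; push_cast; ring
    rw [e2, e3, e4]
    have hNm : (0:ℝ) < (N-m).factorial := by positivity
    have hNm2 : (0:ℝ) < (N+m).factorial := by positivity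
    have h5 : ((N:ℝ)+1-m) ≠ 0 := by
      have : (m:ℝ) ≤ N := by exact_mod_cast h
      nlinarith
    have h6 : ((N:ℝ)+1+m) ≠ 0 := by positivity
    field_simp
    ring
  · rcases le_or_gt m (N+1) with h2 | h2
    · have hm : m = N+1 := by omega
      subst hm
      rw [Acf_of_gt h]
      have : ((N:ℝ)+1)^2 - ((N+1:ℕ):ℝ)^2 = 0 := by push_cast; ring
      rw [this]
      ring
    · rw [Acf_of_gt h2, Acf_of_gt (by omega : N < m)]
      ring

/-- (P5'): `Acf (i+1) N * (N+i+1) = Acf i N * (N-i)`, unconditionally. -/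
lemma Acf_succ_left (i N : ℕ) :
    Acf (i+1) N * ((N:ℝ)+(i:ℝ)+1) = Acf i N * ((N:ℝ)-(i:ℝ)) := by
  rcases lt_or_ge N (i+1) with h | h
  · rw [Acf_of_gt h]
    rcases lt_or_ge N i with h2 | h2
    · rw [Acf_of_gt h2]; ring
    · have : i = N := by omega
      subst this
      simp
  · have hi : i ≤ N := by omega
    rw [Acf, if_pos h, Acf, if_pos hi]
    have e1 : N - i = (N - (i+1)) + 1 := by omega
    have e2 : ((N - i).factorial : ℝ) = ((N:ℝ)-i) * (N-(i+1)).factorial := by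
      rw [e1, Nat.factorial_succ]
      push_cast [Nat.cast_sub (by omega : i+1 ≤ N)]
      ring
    have e3 : ((N + (i+1)).factorial : ℝ) = ((N:ℝ)+i+1) * (N+i).factorial := by
      rw [show N+(i+1) = (N+i)+1 by ring, Nat.factorial_succ]
      push_cast
      ring
    rw [e2, e3]
    have h1 : (0:ℝ) < (N-(i+1)).factorial := by positivity
    have h2 : (0:ℝ) < (N+i).factorial := by positivity
    have h3 : ((N:ℝ)-i) ≠ 0 := by
      have : (i:ℝ) + 1 ≤ N := by exact_mod_cast h
      nlinarith
    have h4 : ((N:ℝ)+i+1) ≠ 0 := by positivity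
    field_simp


/-- Telescoping certificate for alternating sums of `Acf`. -/
noncomputable def gg (N x : ℕ) : ℝ := (-1)^x * Acf (x+1) N * ((x:ℝ)+1+(N:ℝ)) / (2*(N:ℝ))

lemma gg_tel (N x : ℕ) (hN : 1 ≤ N) :
    (-1:ℝ)^x * Acf (x+1) N = gg N x - gg N (x+1) := by
  have h5 := Acf_succ_left (x+1) N
  have hN0 : (N:ℝ) ≠ 0 := Nat.cast_ne_zero.mpr (by omega)
  unfold gg
  push_cast at h5 ⊢
  field_simp
  ring_nf
  ring_nf at h5
  linear_combination (-(-1:ℝ)^x) * h5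

lemma gg_eq_zero {N t : ℕ} (h : N ≤ t) : gg N t = 0 := by
  unfold gg
  rw [Acf_of_gt (by omega)]
  ring

lemma gg_zero (N : ℕ) (hN : 1 ≤ N) : gg N 0 = 1/2 := by
  unfold gg
  rw [Acf_one]
  have h1 : (N:ℝ) ≠ 0 := Nat.cast_ne_zero.mpr (by omega)
  have h2 : (N:ℝ) + 1 ≠ 0 := by positivity
  field_simp
  ring

lemma sum_alt_range (N t : ℕ) :
    ∑ x ∈ range t, (-1:ℝ)^x * Acf (x+1) N = gg N 0 - gg N t := by
  rcases Nat.eq_zero_or_pos N with h | hN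
  · subst h
    rw [gg_eq_zero (Nat.zero_le _), gg_eq_zero (Nat.zero_le _), sub_self]
    exact Finset.sum_eq_zero fun x _ => by rw [Acf_of_gt (Nat.succ_pos x), mul_zero]
  · rw [← Finset.sum_range_sub' (gg N) t]
    exact Finset.sum_congr rfl fun x _ => gg_tel N x hN

lemma sum_alt_Ico (N t : ℕ) (hN : 1 ≤ N) :
    ∑ x ∈ Ico t N, (-1:ℝ)^x * Acf (x+1) N = gg N t := by
  rcases le_or_gt t N with h | h
  · rw [Finset.sum_Ico_eq_sub _ h, sum_alt_range, sum_alt_range,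
      gg_eq_zero (le_refl N)]
    ring
  · rw [Finset.Ico_eq_empty (by omega), Finset.sum_empty, gg_eq_zero (by omega)]

lemma sum_alt_full (N : ℕ) (hN : 1 ≤ N) :
    ∑ x ∈ range N, (-1:ℝ)^x * Acf (x+1) N = 1/2 := by
  rw [sum_alt_range, gg_eq_zero (le_refl N), gg_zero N hN]
  ring

lemma factorial_sq_le {m N : ℕ} (h : m ≤ N) :
    N.factorial ^ 2 ≤ (N - m).factorial * (N + m).factorial := by
  induction m with
  | zero => simp [sq]
  | succ m ih =>
    have hm : m ≤ N := by omega
    have h1 := ih hm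
    have e1 : (N - m).factorial = (N - m) * (N - (m+1)).factorial := by
      rw [show N - m = (N - (m+1)) + 1 by omega, Nat.factorial_succ]
    have e2 : (N + (m+1)).factorial = (N + m + 1) * (N + m).factorial := by
      rw [show N + (m+1) = (N+m)+1 by ring, Nat.factorial_succ]
    calc N.factorial ^ 2 ≤ (N - m).factorial * (N + m).factorial := h1
      _ = (N - m) * ((N - (m+1)).factorial * (N + m).factorial) := by rw [e1]; ring
      _ ≤ (N + m + 1) * ((N - (m+1)).factorial * (N + m).factorial) := by
          apply Nat.mul_le_mul_right
          omega
      _ = (N - (m+1)).factorial * (N + (m+1)).factorial := by rw [e2]; ring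

lemma Acf_le_one (m N : ℕ) : Acf m N ≤ 1 := by
  unfold Acf
  split
  · rename_i h
    rw [div_le_one (by positivity)]
    have := factorial_sq_le h
    exact_mod_cast this
  · norm_num

lemma Acf_ge (m N : ℕ) (hN : 1 ≤ N) : 1 - (m:ℝ)^2/(N:ℝ) ≤ Acf m N := by
  induction m with
  | zero => rw [Acf_zero]; simp
  | succ m ih =>
    rcases le_or_gt (((m:ℝ)+1)^2) ((N:ℝ)) with hband | hband
    · have hmN : (m:ℝ)^2 ≤ (N:ℝ) := by nlinarith [Nat.cast_nonneg (α := ℝ) m]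
      have h5 := Acf_succ_left m N
      have hA1 : 1 - (m:ℝ)^2/(N:ℝ) ≤ Acf m N := ih
      have hA2 : 0 ≤ Acf (m+1) N := Acf_nonneg _ _
      have hA1' : Acf m N ≤ 1 := Acf_le_one m N
      have hNpos : (0:ℝ) < N := by exact_mod_cast hN
      have hmltN : (m:ℝ) < N := by nlinarith [Nat.cast_nonneg (α := ℝ) m]
      have key : Acf (m+1) N = Acf m N * (((N:ℝ)-m)/((N:ℝ)+m+1)) := by
        have hden : (N:ℝ)+m+1 ≠ 0 := by positivity
        field_simp
        linarith [h5]
      rw [key]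
      have hden : (0:ℝ) < (N:ℝ)+m+1 := by positivity
      have hq0 : 0 ≤ 1 - (2*(m:ℝ)+1)/(N:ℝ) := by
        rw [sub_nonneg, div_le_one hNpos]
        nlinarith
      have hq : 1 - (2*(m:ℝ)+1)/(N:ℝ) ≤ ((N:ℝ)-(m:ℝ))/((N:ℝ)+m+1) := by
        have e : 1 - (2*(m:ℝ)+1)/(N:ℝ) = ((N:ℝ) - 2*m - 1)/(N:ℝ) := by
          field_simp
          ring
        rw [e, div_le_div_iff₀ hNpos hden]
        nlinarith [sq_nonneg (m:ℝ), Nat.cast_nonneg (α := ℝ) m]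
      have hA1nn : 0 ≤ 1 - (m:ℝ)^2/(N:ℝ) := by
        rw [sub_nonneg, div_le_one hNpos]
        exact hmN
      have hmul : (1 - (m:ℝ)^2/(N:ℝ)) * (1 - (2*(m:ℝ)+1)/(N:ℝ))
          ≤ Acf m N * (((N:ℝ)-(m:ℝ))/((N:ℝ)+m+1)) :=
        mul_le_mul hA1 hq hq0 (le_trans hA1nn hA1)
      refine le_trans ?_ hmul
      have e2 : (1 - (m:ℝ)^2/(N:ℝ)) * (1 - (2*(m:ℝ)+1)/(N:ℝ))
          = 1 - ((m:ℝ)^2+2*m+1)/(N:ℝ) + ((m:ℝ)^2*(2*m+1))/(N:ℝ)^2 := by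
        field_simp
        ring
      rw [e2]
      have h7 : 0 ≤ ((m:ℝ)^2*(2*m+1))/(N:ℝ)^2 := by positivity
      have e3 : (((m+1:ℕ)):ℝ)^2 = (m:ℝ)^2+2*m+1 := by push_cast; ring
      rw [e3]
      linarith [h7]
    · refine le_trans ?_ (Acf_nonneg (m+1) N)
      have hNpos : (0:ℝ) < (N:ℝ) := by exact_mod_cast hN
      rw [sub_nonpos, one_le_div hNpos]
      push_cast
      nlinarith



/-- Partial-sum builder with weight `1/(m^2)`. -/
noncomputable def row2 (f : ℕ → ℝ) : ℕ → ℝ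
  | 0 => 0
  | N+1 => row2 f N + f (N+1) / ((N:ℝ)+1)^2

/-- Partial-sum builder with weight `1/(m^3)`. -/
noncomputable def row3 (f : ℕ → ℝ) : ℕ → ℝ
  | 0 => 0
  | N+1 => row3 f N + f (N+1) / ((N:ℝ)+1)^3

/-- The bounded multiple-zeta-star sum `L a N = ζ*_{≤N}(2,…,2)` (`a` twos), recursively. -/
noncomputable def Lrec : ℕ → ℕ → ℝ
  | 0 => fun _ => 1
  | a+1 => row2 (Lrec a)

/-- `C a N = Σ_{x<N} 2(-1)^x A(x+1,N)/(x+1)^{2a}`. -/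
noncomputable def Cfd (a N : ℕ) : ℝ :=
  ∑ x ∈ range N, 2 * (-1)^x * Acf (x+1) N / ((x:ℝ)+1)^(2*a)

lemma Cfd_zero (N : ℕ) (hN : 1 ≤ N) : Cfd 0 N = 1 := by
  unfold Cfd
  have : ∀ x ∈ range N, 2 * (-1:ℝ)^x * Acf (x+1) N / ((x:ℝ)+1)^(2*0)
      = 2 * ((-1:ℝ)^x * Acf (x+1) N) := by
    intro x _
    simp [mul_assoc]
  rw [Finset.sum_congr rfl this, ← Finset.mul_sum, sum_alt_full N hN]
  norm_num

lemma key_rel (x N : ℕ) : Acf (x+1) (N+1) * ((N:ℝ)+1)^2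
    = Acf (x+1) N * ((N:ℝ)+1)^2 + Acf (x+1) (N+1) * ((x:ℝ)+1)^2 := by
  have h := Acf_succ_right (x+1) N
  push_cast at h
  linear_combination h

lemma Cfd_ext (a N : ℕ) :
    Cfd a N = ∑ x ∈ range (N+1), 2 * (-1)^x * Acf (x+1) N / ((x:ℝ)+1)^(2*a) := by
  rw [Finset.sum_range_succ, Acf_of_gt (by omega)]
  simp [Cfd]

lemma Cfd_rec (a N : ℕ) :
    Cfd (a+1) (N+1) = Cfd (a+1) N + Cfd a (N+1) / ((N:ℝ)+1)^2 := by
  rw [Cfd_ext (a+1) N]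
  unfold Cfd
  rw [Finset.sum_div, ← Finset.sum_add_distrib]
  apply Finset.sum_congr rfl
  intro x _
  have key := key_rel x N
  have hX : ((x:ℝ)+1) ≠ 0 := by positivity
  have hM : ((N:ℝ)+1) ≠ 0 := by positivity
  have hXp : ((x:ℝ)+1)^(2*a) ≠ 0 := by positivity
  rw [show 2*(a+1) = 2*a + 2 by ring, pow_add]
  generalize hP : ((x:ℝ)+1)^(2*a) = P
  have hP0 : P ≠ 0 := by rw [← hP]; positivity
  ring_nf at key
  field_simp
  ring_nf
  linear_combination key

lemma Lrec_one (a : ℕ) : Lrec a 1 = 1 := by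
  induction a with
  | zero => rfl
  | succ a ih =>
    show row2 (Lrec a) 1 = 1
    simp [row2, ih]

lemma Cfd_one (a : ℕ) : Cfd a 1 = 1 := by
  unfold Cfd
  rw [Finset.sum_range_one, Acf_one]
  norm_num

lemma Lrec_eq (a : ℕ) : ∀ N : ℕ, 1 ≤ N → Lrec a N = Cfd a N := by
  induction a with
  | zero =>
    intro N hN
    rw [Cfd_zero N hN]
    rfl
  | succ a ih =>
    intro N hN
    induction N with
    | zero => omega
    | succ N ihN =>
      rcases Nat.eq_zero_or_pos N with h0 | h1
      · subst h0
        rw [Cfd_one, Lrec_one]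
      · show row2 (Lrec a) N + Lrec a (N+1) / ((N:ℝ)+1)^2 = _
        have e1 : row2 (Lrec a) N = Lrec (a+1) N := rfl
        rw [e1, ihN h1, ih (N+1) (by omega), Cfd_rec]

/-- `Q a b N`, the `Δ`-quantity. -/
noncomputable def Qfd (a b N : ℕ) : ℝ := ∑ x ∈ range N, (-1)^x * Acf (x+1) N *
  (2/((x:ℝ)+1)^(2*a+2*b+1) + 4/((x:ℝ)+1)^(2*b) * ∑ y ∈ range x, 1/((y:ℝ)+1)^(2*a+1))

/-- `R a b N`, the closed form for `S a b N`. -/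
noncomputable def Rfd (a b N : ℕ) : ℝ := ∑ x ∈ range N, (-1)^x * Acf (x+1) N *
  (2/((x:ℝ)+1)^(2*a+2*b+3) + 4/((x:ℝ)+1)^(2*b+2) * ∑ y ∈ range x, 1/((y:ℝ)+1)^(2*a+1))

lemma sum_swap_tri (N : ℕ) (F G : ℕ → ℝ) :
    ∑ x ∈ range N, F x * ∑ y ∈ range x, G y
      = ∑ y ∈ range N, G y * ∑ x ∈ Ico (y+1) N, F x := by
  induction N with
  | zero => simp
  | succ N ih =>
    rw [Finset.sum_range_succ, ih, Finset.sum_range_succ, Finset.Ico_self,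
      Finset.sum_empty, mul_zero, add_zero]
    have h1 : ∀ y ∈ range N, G y * ∑ x ∈ Ico (y+1) (N+1), F x
        = G y * ∑ x ∈ Ico (y+1) N, F x + G y * F N := by
      intro y hy
      rw [Finset.sum_Ico_succ_top (by simp at hy; omega)]
      ring
    rw [Finset.sum_congr rfl h1, Finset.sum_add_distrib]
    congr 1
    rw [Finset.mul_sum]
    exact Finset.sum_congr rfl fun y _ => by ring

lemma gg_succ (N y : ℕ) :
    gg N (y+1) = (-1)^(y+1) * Acf (y+1) N * ((N:ℝ)-(y:ℝ)-1) / (2*(N:ℝ)) := by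
  have h := Acf_succ_left (y+1) N
  push_cast at h
  unfold gg
  rcases Nat.eq_zero_or_pos N with h0 | h1
  · subst h0
    rw [Acf_of_gt (by omega), Acf_of_gt (by omega)]
    simp
  · have hN0 : 2*(N:ℝ) ≠ 0 := by
      have : (0:ℝ) < N := by exact_mod_cast h1
      positivity
    rw [div_eq_div_iff hN0 hN0]
    push_cast
    linear_combination (2*(N:ℝ)*(-1:ℝ)^(y+1)) * h

lemma Wident (a N : ℕ) (hN : 1 ≤ N) : Qfd a 0 N = Lrec a N / (N:ℝ) := by
  have hNR : ((N:ℝ)) ≠ 0 := Nat.cast_ne_zero.mpr (by omega)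
  unfold Qfd
  have e0 : ∀ x : ℕ, (-1:ℝ)^x * Acf (x+1) N *
      (2/((x:ℝ)+1)^(2*a+2*0+1) + 4/((x:ℝ)+1)^(2*0) * ∑ y ∈ range x, 1/((y:ℝ)+1)^(2*a+1))
      = (-1:ℝ)^x * Acf (x+1) N * (2/((x:ℝ)+1)^(2*a+1))
        + ((-1:ℝ)^x * Acf (x+1) N * 4) * ∑ y ∈ range x, 1/((y:ℝ)+1)^(2*a+1) := by
    intro x
    norm_num
    ring
  rw [Finset.sum_congr rfl (fun x _ => e0 x), Finset.sum_add_distrib,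
    sum_swap_tri N (fun x => (-1:ℝ)^x * Acf (x+1) N * 4) (fun y => 1/((y:ℝ)+1)^(2*a+1))]
  have e1 : ∀ y ∈ range N, (1:ℝ)/((y:ℝ)+1)^(2*a+1) *
      ∑ x ∈ Ico (y+1) N, (-1:ℝ)^x * Acf (x+1) N * 4
      = 1/((y:ℝ)+1)^(2*a+1) * (4 * ((-1)^(y+1) * Acf (y+1) N * ((N:ℝ)-(y:ℝ)-1) / (2*(N:ℝ)))) := by
    intro y _
    congr 1
    have : ∑ x ∈ Ico (y+1) N, (-1:ℝ)^x * Acf (x+1) N * 4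
        = 4 * ∑ x ∈ Ico (y+1) N, (-1:ℝ)^x * Acf (x+1) N := by
      rw [Finset.mul_sum]
      exact Finset.sum_congr rfl fun x _ => by ring
    rw [this, sum_alt_Ico N (y+1) hN, gg_succ]
  rw [Finset.sum_congr rfl e1, ← Finset.sum_add_distrib]
  have e2 : ∀ x ∈ range N, (-1:ℝ)^x * Acf (x+1) N * (2/((x:ℝ)+1)^(2*a+1))
      + 1/((x:ℝ)+1)^(2*a+1) * (4 * ((-1)^(x+1) * Acf (x+1) N * ((N:ℝ)-(x:ℝ)-1) / (2*(N:ℝ))))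
      = (2 * (-1)^x * Acf (x+1) N / ((x:ℝ)+1)^(2*a)) / (N:ℝ) := by
    intro x _
    have hX : ((x:ℝ)+1) ≠ 0 := by positivity
    rw [pow_succ]
    generalize ((x:ℝ)+1)^(2*a) = P
    rcases eq_or_ne P 0 with hP | hP
    · subst hP
      simp
    · have hsx : (-1:ℝ)^(x+1) = -(-1)^x := by ring
      rw [hsx]
      field_simp
      ring
  rw [Finset.sum_congr rfl e2, ← Finset.sum_div]
  rw [Lrec_eq a N hN]
  rfl

lemma Qfd_succ (a b N : ℕ) : Qfd a (b+1) N = Rfd a b N := by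
  unfold Qfd Rfd
  have e1 : 2*a+2*(b+1)+1 = 2*a+2*b+3 := by ring
  have e2 : 2*(b+1) = 2*b+2 := by ring
  rw [e1, e2]

lemma step_alg (A A' X M P Q σ s : ℝ) (hP : P ≠ 0) (hQ : Q ≠ 0) (hX : X ≠ 0) (hM : M ≠ 0)
    (key : A' * M^2 = A * M^2 + A' * X^2) :
    s * A' * (2/(P*X^2) + 4/(Q*X^2) * σ)
      = s * A * (2/(P*X^2) + 4/(Q*X^2) * σ) + s * A' * (2/P + 4/Q * σ) / M^2 := by
  field_simp
  ring_nf
  linear_combination (s * (2*Q + P*4*σ)) * key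

lemma Rfd_step (a b N : ℕ) :
    Rfd a b (N+1) = Rfd a b N + Qfd a b (N+1) / ((N:ℝ)+1)^2 := by
  have ext : Rfd a b N = ∑ x ∈ range (N+1), (-1:ℝ)^x * Acf (x+1) N *
      (2/((x:ℝ)+1)^(2*a+2*b+3) + 4/((x:ℝ)+1)^(2*b+2) * ∑ y ∈ range x, 1/((y:ℝ)+1)^(2*a+1)) := by
    rw [Finset.sum_range_succ, Acf_of_gt (by omega : N < N+1)]
    simp [Rfd]
  rw [ext]
  unfold Rfd Qfd
  rw [Finset.sum_div, ← Finset.sum_add_distrib]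
  apply Finset.sum_congr rfl
  intro x _
  have key := key_rel x N
  have hX : ((x:ℝ)+1) ≠ 0 := by positivity
  have hM : ((N:ℝ)+1) ≠ 0 := by positivity
  have hP0 : ((x:ℝ)+1)^(2*a+2*b+1) ≠ 0 := by positivity
  have hQ0 : ((x:ℝ)+1)^(2*b) ≠ 0 := by positivity
  have hPX : ((x:ℝ)+1)^(2*a+2*b+3) = ((x:ℝ)+1)^(2*a+2*b+1) * ((x:ℝ)+1)^2 := by
    rw [← pow_add]
  have hQX : ((x:ℝ)+1)^(2*b+2) = ((x:ℝ)+1)^(2*b) * ((x:ℝ)+1)^2 := by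
    rw [← pow_add]
  rw [hPX, hQX]
  exact step_alg _ _ _ _ _ _ _ _ hP0 hQ0 hX hM key

/-- The truncated star-sum `S a b N`, recursively. -/
noncomputable def Srec (a : ℕ) : ℕ → ℕ → ℝ
  | 0 => row3 (Lrec a)
  | b+1 => row2 (Srec a b)

theorem Srec_eq (a b : ℕ) : ∀ N : ℕ, Srec a b N = Rfd a b N := by
  induction b with
  | zero =>
    intro N
    induction N with
    | zero => simp [Srec, row3, Rfd]
    | succ N ihN =>
      show row3 (Lrec a) N + Lrec a (N+1) / ((N:ℝ)+1)^3 = _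
      have e1 : row3 (Lrec a) N = Rfd a 0 N := ihN
      have e2 : Lrec a (N+1) / ((N:ℝ)+1)^3 = Qfd a 0 (N+1) / ((N:ℝ)+1)^2 := by
        rw [Wident a (N+1) (by omega)]
        push_cast
        rw [div_div, ← pow_succ']
      rw [e1, e2]
      exact (Rfd_step a 0 N).symm
  | succ b ih =>
    intro N
    induction N with
    | zero => simp [Srec, row2, Rfd]
    | succ N ihN =>
      show row2 (Srec a b) N + Srec a b (N+1) / ((N:ℝ)+1)^2 = _
      have e1 : row2 (Srec a b) N = Rfd a (b+1) N := ihN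
      rw [e1, ih (N+1), ← Qfd_succ a b (N+1)]
      exact (Rfd_step a (b+1) N).symm





/-- The recursion computing bounded multiple zeta star sums. -/
noncomputable def RR : (n : ℕ) → (Fin n → ℕ) → ℕ → ℝ
  | 0, _, _ => 1
  | _+1, _, 0 => 0
  | n+1, k, M+1 => RR (n+1) k M + RR n (fun i => k i.castSucc) (M+1) / ((M:ℝ)+1)^(k (Fin.last n))
  termination_by n _ M => (n, M)

lemma RR_zero (k : Fin 0 → ℕ) (M : ℕ) : RR 0 k M = 1 := by rw [RR]

lemma RR_bot (n : ℕ) (k : Fin (n+1) → ℕ) : RR (n+1) k 0 = 0 := by rw [RR]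

lemma RR_succ (n : ℕ) (k : Fin (n+1) → ℕ) (M : ℕ) :
    RR (n+1) k (M+1) = RR (n+1) k M
      + RR n (fun i => k i.castSucc) (M+1) / ((M:ℝ)+1)^(k (Fin.last n)) := by
  rw [RR]

/-- Monotone ℕ+ tuples of length n bounded by M form a finite set. -/
lemma bdd_finite (n M : ℕ) :
    Set.Finite {g : {f : Fin n → ℕ+ // Monotone f} | ∀ i, (g.1 i : ℕ) ≤ M} := by
  have h1 : Set.Finite {h : Fin n → ℕ | ∀ i, h i ≤ M} := by
    have hs : {h : Fin n → ℕ | ∀ i, h i ≤ M} ⊆ Set.pi Set.univ (fun _ : Fin n => Set.Iic M) := by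
      intro h hh i _
      exact hh i
    exact Set.Finite.subset (Set.Finite.pi (fun _ => Set.finite_Iic M)) hs
  apply Set.Finite.of_finite_image (f := fun g => fun i => ((g.1 i : ℕ)))
  · apply Set.Finite.subset h1
    rintro _ ⟨g, hg, rfl⟩
    exact fun i => hg i
  · intro g _ g' _ hgg
    apply Subtype.ext
    funext i
    exact PNat.coe_injective (congrFun hgg i)

/-- The finset of monotone tuples bounded by `M`. -/
noncomputable def bddFin (n M : ℕ) : Finset {f : Fin n → ℕ+ // Monotone f} :=
  (bdd_finite n M).toFinset

lemma mem_bddFin {n M : ℕ} {g : {f : Fin n → ℕ+ // Monotone f}} :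
    g ∈ bddFin n M ↔ ∀ i, (g.1 i : ℕ) ≤ M := by
  simp [bddFin, Set.Finite.mem_toFinset]

lemma monotone_snoc {n : ℕ} (f : Fin n → ℕ+) (c : ℕ+) (hf : Monotone f)
    (hc : ∀ i, f i ≤ c) : Monotone (Fin.snoc f c) := by
  intro i j hij
  revert hij
  refine Fin.lastCases ?_ ?_ j
  · intro _
    rw [Fin.snoc_last]
    refine Fin.lastCases ?_ ?_ i
    · rw [Fin.snoc_last]
    · intro i'
      rw [Fin.snoc_castSucc]
      exact hc i'
  · intro j'
    refine Fin.lastCases ?_ ?_ i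
    · intro h
      exact absurd (lt_of_le_of_lt h (Fin.castSucc_lt_last j')) (lt_irrefl _)
    · intro i' h
      rw [Fin.snoc_castSucc, Fin.snoc_castSucc]
      exact hf (Fin.castSucc_le_castSucc_iff.mp h)

theorem sum_bddFin (n : ℕ) : ∀ (k : Fin n → ℕ) (M : ℕ),
    ∑ g ∈ bddFin n M, ∏ i, (1 : ℝ)/((g.1 i : ℝ))^(k i) = RR n k M := by
  induction n with
  | zero =>
    intro k M
    rw [RR_zero]
    have g0 : {f : Fin 0 → ℕ+ // Monotone f} :=
      ⟨fun i => i.elim0, fun i => i.elim0⟩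
    have huniv : bddFin 0 M = {g0} := by
      apply Finset.ext
      intro g
      simp only [mem_bddFin, Finset.mem_singleton]
      constructor
      · intro _
        exact Subtype.ext (funext fun i => i.elim0)
      · intro _
        exact fun i => i.elim0
    rw [huniv, Finset.sum_singleton]
    simp
  | succ n ih =>
    intro k M
    induction M with
    | zero =>
      rw [RR_bot]
      have he : bddFin (n+1) 0 = ∅ := by
        apply Finset.eq_empty_of_forall_notMem
        intro g hg
        have h2 := (mem_bddFin.mp hg) 0
        have h1 := (g.1 0).pos
        omega
      rw [he, Finset.sum_empty]
    | succ M ihM =>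
      rw [RR_succ, ← ihM]
      rw [← Finset.sum_filter_add_sum_filter_not (bddFin (n+1) (M+1))
        (fun g => (g.1 (Fin.last n) : ℕ) ≤ M)]
      congr 1
      · apply Finset.sum_congr
        · apply Finset.ext
          intro g
          simp only [Finset.mem_filter, mem_bddFin]
          constructor
          · rintro ⟨h1, h2⟩ i
            calc (g.1 i : ℕ) ≤ (g.1 (Fin.last n) : ℕ) := by
                  exact_mod_cast g.2 (Fin.le_last i)
              _ ≤ M := h2
          · intro h
            exact ⟨fun i => le_trans (h i) (Nat.le_succ M), h (Fin.last n)⟩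
        · intro g _
          rfl
      · -- the complement part: top entry = M+1
        rw [← ih (fun i => k i.castSucc) (M+1), Finset.sum_div]
        set c : ℕ+ := ⟨M+1, Nat.succ_pos M⟩ with hc
        have hcv : (c : ℕ) = M+1 := rfl
        have hcoe : ((c : ℕ) : ℝ) = (M:ℝ)+1 := by
          rw [hcv]; push_cast; ring
        refine Finset.sum_bij'
          (i := fun g (hg : g ∈ _) => (⟨fun i => g.1 i.castSucc,
            g.2.comp Fin.strictMono_castSucc.monotone⟩ : {f : Fin n → ℕ+ // Monotone f}))
          (j := fun g' (hg' : g' ∈ bddFin n (M+1)) => (⟨Fin.snoc g'.1 c, by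
            apply monotone_snoc _ _ g'.2
            intro i
            have h1 := mem_bddFin.mp hg' i
            rw [← PNat.coe_le_coe, hcv]
            exact h1⟩ : {f : Fin (n+1) → ℕ+ // Monotone f}))
          ?_ ?_ ?_ ?_ ?_
        · intro g hg
          rw [mem_bddFin]
          intro i
          exact (mem_bddFin.mp (Finset.mem_filter.mp hg).1) i.castSucc
        · intro g' hg'
          rw [Finset.mem_filter, mem_bddFin]
          constructor
          · intro i
            refine Fin.lastCases ?_ ?_ i
            · dsimp only
              rw [Fin.snoc_last, hcv]
            · intro i'
              dsimp only
              rw [Fin.snoc_castSucc]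
              exact mem_bddFin.mp hg' i'
          · dsimp only
            rw [Fin.snoc_last, hcv]
            omega
        · intro g hg
          apply Subtype.ext
          simp only
          have h1 := (mem_bddFin.mp (Finset.mem_filter.mp hg).1) (Fin.last n)
          have h2 := (Finset.mem_filter.mp hg).2
          have hlast : c = g.1 (Fin.last n) := by
            apply PNat.coe_injective
            rw [hcv]
            omega
          funext i
          refine Fin.lastCases ?_ ?_ i
          · rw [Fin.snoc_last, hlast]
          · intro i'
            rw [Fin.snoc_castSucc]
        · intro g' hg'
          apply Subtype.ext
          funext i
          simp only
          rw [Fin.snoc_castSucc]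
        · intro g hg
          simp only
          rw [Fin.prod_univ_castSucc
            (f := fun i => (1:ℝ)/((g.1 i : ℝ))^(k i))]
          have h1 := (mem_bddFin.mp (Finset.mem_filter.mp hg).1) (Fin.last n)
          have h2 := (Finset.mem_filter.mp hg).2
          have hlast : ((g.1 (Fin.last n) : ℕ) : ℝ) = (M:ℝ)+1 := by
            have : ((g.1 (Fin.last n)) : ℕ) = M+1 := by omega
            rw [this]
            push_cast
            ring
          rw [hlast, mul_one_div]



lemma RR_two (a : ℕ) : ∀ M, RR a (fun _ => 2) M = Lrec a M := by
  induction a with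
  | zero => intro M; rw [RR_zero]; rfl
  | succ a ih =>
    intro M
    induction M with
    | zero => rw [RR_bot]; rfl
    | succ M ihM =>
      rw [RR_succ, ihM, ih (M+1)]
      rfl

lemma RR_expo232 (a b : ℕ) : ∀ M, RR (a+b+1) (expo232 a b) M = Srec a b M := by
  induction b with
  | zero =>
    intro M
    induction M with
    | zero => rw [RR_bot]; rfl
    | succ M ihM =>
      show RR (a+1) (expo232 a 0) (M+1) = Srec a 0 (M+1)
      rw [RR_succ]
      have h1 : (fun i : Fin a => expo232 a 0 i.castSucc) = (fun _ : Fin a => 2) := by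
        funext i
        have hi := i.isLt
        simp only [expo232, Fin.coe_castSucc]
        rw [if_neg (by omega)]
      have h2 : expo232 a 0 (Fin.last a) = 3 := by
        simp [expo232, Fin.last]
      rw [h1, h2, RR_two]
      have h3 : RR (a+1) (expo232 a 0) M = Srec a 0 M := ihM
      rw [h3]
      rfl
  | succ b ih =>
    intro M
    induction M with
    | zero => rw [RR_bot]; rfl
    | succ M ihM =>
      show RR ((a+b+1)+1) (expo232 a (b+1)) (M+1) = Srec a (b+1) (M+1)
      rw [RR_succ]
      have h1 : (fun i : Fin (a+b+1) => expo232 a (b+1) i.castSucc) = expo232 a b := by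
        funext i
        simp only [expo232, Fin.coe_castSucc]
      have h2 : expo232 a (b+1) (Fin.last (a+b+1)) = 2 := by
        simp only [expo232, Fin.last]
        rw [if_neg (by omega)]
      rw [h1, h2, ih (M+1)]
      have h3 : RR ((a+b+1)+1) (expo232 a (b+1)) M = Srec a (b+1) M := ihM
      rw [h3]
      rfl

lemma summable_pnat_two : Summable (fun m : ℕ+ => (1:ℝ)/((m:ℕ):ℝ)^2) := by
  have h : Summable (fun n : ℕ => (1:ℝ)/(n:ℝ)^2) :=
    Real.summable_one_div_nat_pow.mpr one_lt_two
  exact h.comp_injective PNat.coe_injective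

lemma summable_prod_pi (n : ℕ) :
    Summable (fun f : Fin n → ℕ+ => ∏ i, (1:ℝ)/((f i : ℕ):ℝ)^2) := by
  induction n with
  | zero =>
    haveI : Unique (Fin 0 → ℕ+) :=
      ⟨⟨fun i => i.elim0⟩, fun f => funext fun i => i.elim0⟩
    exact Summable.of_finite
  | succ n ih =>
    have hs : Summable (fun x : ℕ+ × (Fin n → ℕ+) =>
        ((1:ℝ)/((x.1:ℕ):ℝ)^2) * ∏ i, (1:ℝ)/((x.2 i : ℕ):ℝ)^2) := by
      apply summable_pnat_two.mul_of_nonneg ih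
      · intro m
        positivity
      · intro f
        positivity
    refine (Equiv.summable_iff (Fin.consEquiv (fun _ : Fin (n+1) => ℕ+))).mp ?_
    have heq : ((fun f : Fin (n+1) → ℕ+ => ∏ i, (1:ℝ)/((f i : ℕ):ℝ)^2)
        ∘ (Fin.consEquiv (fun _ : Fin (n+1) => ℕ+)))
        = (fun x : ℕ+ × (Fin n → ℕ+) =>
          ((1:ℝ)/((x.1:ℕ):ℝ)^2) * ∏ i, (1:ℝ)/((x.2 i : ℕ):ℝ)^2) := by
      funext x
      simp only [Function.comp]
      rw [Fin.prod_univ_succ]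
      simp [Fin.consEquiv, Fin.cons_zero, Fin.cons_succ]
    rw [heq]
    exact hs

lemma summable_F (n : ℕ) (k : Fin n → ℕ) (hk : ∀ i, 2 ≤ k i) :
    Summable (fun g : {f : Fin n → ℕ+ // Monotone f} =>
      ∏ i, (1:ℝ)/((g.1 i : ℝ))^(k i)) := by
  have h2 := (summable_prod_pi n).subtype {f : Fin n → ℕ+ | Monotone f}
  apply Summable.of_nonneg_of_le (fun g => by positivity) (fun g => ?_) h2
  apply Finset.prod_le_prod
  · intro i _
    positivity
  · intro i _
    have hm : (1:ℝ) ≤ ((g.1 i : ℕ):ℝ) := by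
      exact_mod_cast (g.1 i).pos
    apply one_div_le_one_div_of_le
    · positivity
    · exact pow_le_pow_right₀ hm (hk i)

theorem tendsto_RR (n : ℕ) (k : Fin (n+1) → ℕ) (hk : ∀ i, 2 ≤ k i) :
    Tendsto (fun M => RR (n+1) k M) atTop (𝓝 (mzvStar (n+1) k)) := by
  have hsum := summable_F (n+1) k hk
  have hh := hsum.hasSum
  have hmono : Monotone (fun M => bddFin (n+1) M) := by
    intro M M' h
    intro g hg
    rw [mem_bddFin] at hg ⊢
    exact fun i => le_trans (hg i) h
  have hex : ∀ g : {f : Fin (n+1) → ℕ+ // Monotone f}, ∃ M, g ∈ bddFin (n+1) M :=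
    fun g => ⟨(g.1 (Fin.last n) : ℕ), mem_bddFin.mpr
      (fun i => by exact_mod_cast g.2 (Fin.le_last i))⟩
  have ht : Tendsto (fun M => bddFin (n+1) M) atTop atTop :=
    tendsto_atTop_finset_of_monotone hmono hex
  have hc := hh.comp ht
  exact hc.congr (fun M => sum_bddFin (n+1) k M)

theorem tendsto_Srec (a b : ℕ) :
    Tendsto (fun M => Srec a b M) atTop (𝓝 (mzvStar (a+b+1) (expo232 a b))) := by
  have hk : ∀ i, 2 ≤ expo232 a b i := by
    intro i
    simp only [expo232]
    split <;> omega
  have h := tendsto_RR (a+b) (expo232 a b) hk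
  exact h.congr (fun M => RR_expo232 a b M)


lemma Acf_tendsto (m : ℕ) : Tendsto (fun N => Acf m N) atTop (𝓝 1) := by
  have hlow : Tendsto (fun N : ℕ => 1 - (m:ℝ)^2/(N:ℝ)) atTop (𝓝 1) := by
    have h0 : Tendsto (fun N : ℕ => ((m:ℝ)^2)/(N:ℝ)) atTop (𝓝 0) :=
      tendsto_const_div_atTop_nhds_zero_nat _
    have := (tendsto_const_nhds (x := (1:ℝ)) (f := atTop)).sub h0
    simpa using this
  refine tendsto_of_tendsto_of_tendsto_of_le_of_le' hlow tendsto_const_nhds ?_ ?_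
  · filter_upwards [eventually_ge_atTop 1] with N hN
    exact Acf_ge m N hN
  · filter_upwards with N
    exact Acf_le_one m N

lemma harmonic_le_sqrt : ∀ x : ℕ, ∑ y ∈ range x, 1/((y:ℝ)+1) ≤ 2*Real.sqrt x := by
  intro x
  induction x with
  | zero => simp
  | succ x ih =>
    rw [Finset.sum_range_succ]
    have hs0 : 0 ≤ Real.sqrt x := Real.sqrt_nonneg _
    have ht1 : 1 ≤ Real.sqrt ((x:ℝ)+1) := by
      have h := Real.sqrt_le_sqrt (show (1:ℝ) ≤ (x:ℝ)+1 by linarith [Nat.cast_nonneg (α := ℝ) x])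
      rwa [Real.sqrt_one] at h
    have hs2 : Real.sqrt x ^ 2 = (x:ℝ) := Real.sq_sqrt (Nat.cast_nonneg x)
    have ht2 : Real.sqrt ((x:ℝ)+1) ^ 2 = (x:ℝ)+1 := by
      apply Real.sq_sqrt
      positivity
    have key : 1/((x:ℝ)+1) ≤ 2*Real.sqrt ((x:ℝ)+1) - 2*Real.sqrt x := by
      rw [div_le_iff₀ (by positivity)]
      nlinarith [ht1, hs0, hs2, ht2, sq_nonneg (Real.sqrt ((x:ℝ)+1) - Real.sqrt x)]
    have hcast : Real.sqrt ((x+1:ℕ):ℝ) = Real.sqrt ((x:ℝ)+1) := by push_cast; rfl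
    rw [hcast]
    linarith [ih]

lemma sigma_le_sqrt (a x : ℕ) :
    ∑ y ∈ range x, 1/((y:ℝ)+1)^(2*a+1) ≤ 2*Real.sqrt ((x:ℝ)+1) := by
  have h1 : ∑ y ∈ range x, 1/((y:ℝ)+1)^(2*a+1) ≤ ∑ y ∈ range x, 1/((y:ℝ)+1) := by
    apply Finset.sum_le_sum
    intro y _
    have hy : (1:ℝ) ≤ (y:ℝ)+1 := by linarith [Nat.cast_nonneg (α := ℝ) y]
    have := pow_le_pow_right₀ hy (by omega : 1 ≤ 2*a+1)
    rw [pow_one] at this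
    apply one_div_le_one_div_of_le (by linarith) this
  have h2 : Real.sqrt x ≤ Real.sqrt ((x:ℝ)+1) := by
    apply Real.sqrt_le_sqrt
    linarith
  calc _ ≤ 2*Real.sqrt x := le_trans h1 (harmonic_le_sqrt x)
    _ ≤ _ := by linarith

/-- The summable dominating function. -/
noncomputable def bnd (x : ℕ) : ℝ := 2/((x:ℝ)+1)^3 + 8*Real.sqrt ((x:ℝ)+1)/((x:ℝ)+1)^2

lemma bnd_nonneg (x : ℕ) : 0 ≤ bnd x := by unfold bnd; positivity

lemma summable_bnd : Summable bnd := by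
  apply Summable.add
  · have h : Summable (fun n : ℕ => (1:ℝ)/(n:ℝ)^3) :=
      Real.summable_one_div_nat_pow.mpr (by omega)
    have h2 := (summable_nat_add_iff 1).mpr h
    apply Summable.congr (h2.mul_left 2)
    intro x
    push_cast
    ring
  · have h : Summable (fun n : ℕ => (1:ℝ)/(n:ℝ)^((3:ℝ)/2)) :=
      Real.summable_one_div_nat_rpow.mpr (by norm_num)
    have h2 := (summable_nat_add_iff 1).mpr h
    apply Summable.congr (h2.mul_left 8)
    intro x
    have hx : (0:ℝ) < (x:ℝ)+1 := by positivity
    have e1 : ((x+1:ℕ):ℝ) = (x:ℝ)+1 := by push_cast; ring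
    rw [e1, Real.sqrt_eq_rpow]
    rw [show ((x:ℝ)+1)^2 = ((x:ℝ)+1)^((2:ℝ)) by
      rw [← Real.rpow_natCast ((x:ℝ)+1) 2]; norm_num]
    rw [mul_div_assoc, ← Real.rpow_sub hx]
    rw [show (1:ℝ)/2-2 = -((3:ℝ)/2) by norm_num, Real.rpow_neg hx.le, one_div]




/-- The limit term function. -/
noncomputable def tfun (a b x : ℕ) : ℝ :=
  (-1)^x * (2/((x:ℝ)+1)^(2*a+2*b+3)
    + 4/((x:ℝ)+1)^(2*b+2) * ∑ y ∈ range x, 1/((y:ℝ)+1)^(2*a+1))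

lemma tfun_abs_le (a b x : ℕ) : |tfun a b x| ≤ bnd x := by
  have hx1 : (1:ℝ) ≤ (x:ℝ)+1 := by linarith [Nat.cast_nonneg (α := ℝ) x]
  have hσ0 : 0 ≤ ∑ y ∈ range x, 1/((y:ℝ)+1)^(2*a+1) := by positivity
  have habs : |tfun a b x| = 2/((x:ℝ)+1)^(2*a+2*b+3)
      + 4/((x:ℝ)+1)^(2*b+2) * ∑ y ∈ range x, 1/((y:ℝ)+1)^(2*a+1) := by
    unfold tfun
    rw [abs_mul, abs_pow, abs_neg, abs_one, one_pow, one_mul, abs_of_nonneg (by positivity)]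
  rw [habs]
  unfold bnd
  apply add_le_add
  · have h1 : ((x:ℝ)+1)^3 ≤ ((x:ℝ)+1)^(2*a+2*b+3) := pow_le_pow_right₀ hx1 (by omega)
    exact div_le_div_of_nonneg_left (by norm_num) (by positivity) h1
  · have h1 : ((x:ℝ)+1)^2 ≤ ((x:ℝ)+1)^(2*b+2) := pow_le_pow_right₀ hx1 (by omega)
    have h2 : 4/((x:ℝ)+1)^(2*b+2) ≤ 4/((x:ℝ)+1)^2 :=
      div_le_div_of_nonneg_left (by norm_num) (by positivity) h1
    calc 4/((x:ℝ)+1)^(2*b+2) * ∑ y ∈ range x, 1/((y:ℝ)+1)^(2*a+1)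
        ≤ 4/((x:ℝ)+1)^2 * (2*Real.sqrt ((x:ℝ)+1)) := by
          apply mul_le_mul h2 (sigma_le_sqrt a x) hσ0 (by positivity)
      _ = 8*Real.sqrt ((x:ℝ)+1)/((x:ℝ)+1)^2 := by ring

lemma summable_tfun (a b : ℕ) : Summable (tfun a b) :=
  Summable.of_norm_bounded summable_bnd (fun x => tfun_abs_le a b x)

lemma tendsto_Rfd (a b : ℕ) :
    Tendsto (fun M => Rfd a b M) atTop (𝓝 (∑' x, tfun a b x)) := by
  have key := tendsto_tsum_of_dominated_convergence (𝓕 := atTop) (bound := bnd)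
    (f := fun M x => if x < M then Acf (x+1) M * tfun a b x else 0)
    (g := tfun a b) summable_bnd ?_ ?_
  · apply key.congr
    intro M
    rw [tsum_eq_sum (s := range M)]
    · apply Finset.sum_congr rfl
      intro x hx
      beta_reduce
      rw [if_pos (Finset.mem_range.mp hx)]
      unfold tfun
      ring
    · intro x hx
      beta_reduce
      rw [if_neg (by simpa using hx)]
  · intro x
    have h1 : Tendsto (fun M => Acf (x+1) M * tfun a b x) atTop (𝓝 (tfun a b x)) := by
      have h2 := (Acf_tendsto (x+1)).mul_const (tfun a b x)
      simpa using h2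
    apply Tendsto.congr' ?_ h1
    filter_upwards [eventually_ge_atTop (x+1)] with M hM
    beta_reduce
    rw [if_pos (by omega)]
  · filter_upwards with M x
    by_cases h : x < M
    · rw [if_pos h]
      rw [norm_mul]
      calc ‖Acf (x+1) M‖ * ‖tfun a b x‖ ≤ 1 * ‖tfun a b x‖ := by
            apply mul_le_mul_of_nonneg_right _ (norm_nonneg _)
            rw [Real.norm_eq_abs, abs_of_nonneg (Acf_nonneg _ _)]
            exact Acf_le_one _ _
        _ = ‖tfun a b x‖ := one_mul _
        _ ≤ bnd x := by rw [Real.norm_eq_abs]; exact tfun_abs_le a b x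
    · rw [if_neg h, norm_zero]
      exact bnd_nonneg x





lemma summable_shift_pow (k : ℕ) (hk : 2 ≤ k) :
    Summable (fun m : ℕ => (1:ℝ)/((m:ℝ)+1)^k) := by
  have h : Summable (fun n : ℕ => (1:ℝ)/(n:ℝ)^k) :=
    Real.summable_one_div_nat_pow.mpr hk
  have h2 := (summable_nat_add_iff 1).mpr h
  apply h2.congr
  intro x
  push_cast
  ring

lemma summable_zetaA_term (k : ℕ) (hk : 2 ≤ k) :
    Summable (fun m : ℕ => (-1:ℝ)^(m+1)/((m:ℝ)+1)^k) := by
  apply Summable.of_norm_bounded (summable_shift_pow k hk)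
  intro m
  rw [norm_div, norm_pow, norm_neg, norm_one, one_pow]
  rw [Real.norm_eq_abs, abs_of_nonneg (by positivity)]

lemma zetaA_eq (k : ℕ) (hk : 2 ≤ k) :
    zetaA k = ∑' m : ℕ, (-1:ℝ)^(m+1)/((m:ℝ)+1)^k := by
  unfold zetaA
  rw [if_neg (by omega)]
  apply Filter.Tendsto.limUnder_eq
  exact (summable_zetaA_term k hk).hasSum.tendsto_sum_nat

lemma summable_dz_term (a b : ℕ) :
    Summable (fun m : ℕ => ((-1:ℝ)^(m+2)/((m:ℝ)+2)^(2*b+2))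
      * ∑ j ∈ Finset.range (m+1), 1/((j:ℝ)+1)^(2*a+1)) := by
  have hb : Summable (fun m : ℕ => bnd (m+1)) := (summable_nat_add_iff 1).mpr summable_bnd
  apply Summable.of_norm_bounded hb
  intro m
  have hm2 : (0:ℝ) < (m:ℝ)+2 := by positivity
  have hσ0 : 0 ≤ ∑ j ∈ Finset.range (m+1), 1/((j:ℝ)+1)^(2*a+1) := by positivity
  rw [norm_mul, norm_div, norm_pow, norm_neg, norm_one, one_pow, Real.norm_eq_abs,
    Real.norm_eq_abs, abs_of_nonneg (by positivity), abs_of_nonneg hσ0]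
  have e1 : ((m+1:ℕ):ℝ)+1 = (m:ℝ)+2 := by push_cast; ring
  have h1 : ∑ j ∈ Finset.range (m+1), 1/((j:ℝ)+1)^(2*a+1) ≤ 2*Real.sqrt ((m:ℝ)+2) := by
    have := sigma_le_sqrt a (m+1)
    rwa [e1] at this
  have h2 : ((m:ℝ)+2)^2 ≤ ((m:ℝ)+2)^(2*b+2) :=
    pow_le_pow_right₀ (by linarith) (by omega)
  have hbnd : bnd (m+1) = 2/((m:ℝ)+2)^3 + 8*Real.sqrt ((m:ℝ)+2)/((m:ℝ)+2)^2 := by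
    unfold bnd
    rw [e1]
  rw [hbnd]
  calc 1/((m:ℝ)+2)^(2*b+2) * ∑ j ∈ Finset.range (m+1), 1/((j:ℝ)+1)^(2*a+1)
      ≤ 1/((m:ℝ)+2)^2 * (2*Real.sqrt ((m:ℝ)+2)) := by
        apply mul_le_mul (div_le_div_of_nonneg_left (by norm_num) (by positivity) h2)
          h1 hσ0 (by positivity)
    _ = 2*Real.sqrt ((m:ℝ)+2)/((m:ℝ)+2)^2 := by ring
    _ ≤ 2/((m:ℝ)+2)^3 + 8*Real.sqrt ((m:ℝ)+2)/((m:ℝ)+2)^2 := by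
        have : (0:ℝ) ≤ Real.sqrt ((m:ℝ)+2) := Real.sqrt_nonneg _
        have h3 : 2*Real.sqrt ((m:ℝ)+2)/((m:ℝ)+2)^2 ≤ 8*Real.sqrt ((m:ℝ)+2)/((m:ℝ)+2)^2 := by
          gcongr
          linarith

        have h4 : (0:ℝ) ≤ 2/((m:ℝ)+2)^3 := by positivity
        linarith

open Topology

lemma dzetaA2_eq (a b : ℕ) :
    dzetaA2 (2*a+1) (2*b+2) = ∑' m : ℕ, ((-1:ℝ)^(m+2)/((m:ℝ)+2)^(2*b+2))
      * ∑ j ∈ Finset.range (m+1), 1/((j:ℝ)+1)^(2*a+1) := by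
  unfold dzetaA2
  apply Filter.Tendsto.limUnder_eq
  have h := (summable_dz_term a b).hasSum.tendsto_sum_nat
  exact h

lemma tsum_tfun (a b : ℕ) :
    ∑' x, tfun a b x = -4 * dzetaA2 (2*a+1) (2*b+2) - 2 * zetaA (2*a+2*b+3) := by
  have hw : 2 ≤ 2*a+2*b+3 := by omega
  set t1 : ℕ → ℝ := fun x => (-2) * ((-1:ℝ)^(x+1)/((x:ℝ)+1)^(2*a+2*b+3)) with ht1
  set t2 : ℕ → ℝ := fun x => (-1:ℝ)^x *
    (4/((x:ℝ)+1)^(2*b+2) * ∑ y ∈ range x, 1/((y:ℝ)+1)^(2*a+1)) with ht2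
  have hsplit : ∀ x, tfun a b x = t1 x + t2 x := by
    intro x
    rw [ht1, ht2]
    unfold tfun
    ring
  have hsum1 : Summable t1 := (summable_zetaA_term _ hw).mul_left (-2)
  have hsum2 : Summable t2 := by
    have h := (summable_tfun a b).sub hsum1
    apply h.congr
    intro x
    rw [hsplit x]
    ring
  have h20 : t2 0 = 0 := by
    rw [ht2]
    simp
  calc ∑' x, tfun a b x = ∑' x, (t1 x + t2 x) := tsum_congr hsplit
    _ = (∑' x, t1 x) + ∑' x, t2 x := Summable.tsum_add hsum1 hsum2
    _ = -4 * dzetaA2 (2*a+1) (2*b+2) - 2 * zetaA (2*a+2*b+3) := by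
        have e1 : ∑' x, t1 x = -2 * zetaA (2*a+2*b+3) := by
          rw [ht1, tsum_mul_left, zetaA_eq _ hw]
        have e2 : ∑' x, t2 x = -4 * dzetaA2 (2*a+1) (2*b+2) := by
          rw [Summable.tsum_eq_zero_add hsum2, h20, zero_add]
          have e3 : ∀ m : ℕ, t2 (m+1) = (-4) * (((-1:ℝ)^(m+2)/((m:ℝ)+2)^(2*b+2))
              * ∑ j ∈ Finset.range (m+1), 1/((j:ℝ)+1)^(2*a+1)) := by
            intro m
            rw [ht2]
            push_cast
            ring
          rw [tsum_congr e3, tsum_mul_left, dzetaA2_eq]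
        rw [e1, e2]
        ring

theorem Hstar_eq (a b : ℕ) :
    Hstar a b = -4 * dzetaA2 (2*a+1) (2*b+2) - 2 * zetaA (2*a+2*b+3) := by
  have h1 : Tendsto (fun M => Srec a b M) atTop (𝓝 (Hstar a b)) := tendsto_Srec a b
  have h2 : Tendsto (fun M => Srec a b M) atTop (𝓝 (∑' x, tfun a b x)) :=
    (tendsto_Rfd a b).congr (fun M => (Srec_eq a b M).symm)
  rw [tendsto_nhds_unique h1 h2, tsum_tfun]
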